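/- Let q be a prime power, let μ = [μ_1 ≥ … ≥ μ_r] be a partition and ν = [ν_1 ≥ … ≥ ν_r] a weakly decreasing sequence of nonnegative integers. Set ν′ = [ν_1, …, ν_{r−1}, ν_r − 1]. Then V(μ,ν) = V(μ′,ν) + V(μ′,ν′) − q^{μ_r−1}·V(μ″,ν′) + (q^{μ_r−1} − 1)·V(μ‴,ν′), where any summand whose partition argument or sequence argument has a negative entry is omitted (treated as 0). -/

import Mathlib

open scoped Classical

/-- The q-binomial coefficient `binom(m,k)_q = ∏_{i=1}^{k} (q^{m−k+i} − 1)/(q^i − 1)`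
for `0 ≤ k ≤ m`, and `0` otherwise. -/
noncomputable def qbinom (q : ℚ) (m k : ℤ) : ℚ :=
  if 0 ≤ k ∧ k ≤ m then
    ∏ i ∈ Finset.Icc 1 k.toNat, (q ^ (m - k + (i : ℤ)).toNat - 1) / (q ^ i - 1)
  else 0

namespace QB

noncomputable def natB (Q : ℚ) (M K : ℕ) : ℚ :=
  ∏ i ∈ Finset.Icc 1 K, (Q ^ (M - K + i) - 1) / (Q ^ i - 1)

variable {Q : ℚ}

lemma den_ne (hQ : 2 ≤ Q) {i : ℕ} (hi : 1 ≤ i) : Q ^ i - 1 ≠ 0 := by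
  have : (1:ℚ) < Q ^ i := one_lt_pow₀ (by linarith) (by omega)
  linarith

lemma hQ0 (hQ : 2 ≤ Q) : Q ≠ 0 := by linarith

lemma qbinom_neg {m k : ℤ} (h : ¬(0 ≤ k ∧ k ≤ m)) : qbinom Q m k = 0 := if_neg h

lemma qbinom_zero_right {m : ℤ} (hm : 0 ≤ m) : qbinom Q m 0 = 1 := by
  rw [qbinom, if_pos ⟨le_refl 0, hm⟩]
  simp

lemma qbinom_eq_natB {m k : ℤ} (hk : 0 ≤ k) (hkm : k ≤ m) :
    qbinom Q m k = natB Q m.toNat k.toNat := by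
  rw [qbinom, if_pos ⟨hk, hkm⟩, natB]
  refine Finset.prod_congr rfl fun i hi => ?_
  simp only [Finset.mem_Icc] at hi
  have e : (m - k + (i : ℤ)).toNat = m.toNat - k.toNat + i := by omega
  rw [e]

lemma nat_L2 {M K : ℕ} (h : K ≤ M) :
    natB Q (M+1) (K+1) = natB Q M K * ((Q ^ (M+1) - 1) / (Q ^ (K+1) - 1)) := by
  rw [natB, Finset.prod_Icc_succ_top (by omega)]
  have e1 : M + 1 - (K + 1) + (K + 1) = M + 1 := by omega
  rw [e1]
  congr 1
  refine Finset.prod_congr rfl fun i hi => ?_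
  have e2 : M + 1 - (K + 1) + i = M - K + i := by omega
  rw [e2]

lemma nat_L2' (hQ : 2 ≤ Q) {M K : ℕ} (h : K ≤ M) :
    natB Q (M+1) (K+1) * (Q ^ (K+1) - 1) = natB Q M K * (Q ^ (M+1) - 1) := by
  rw [nat_L2 h]
  have := den_ne hQ (i := K+1) (by omega)
  field_simp

lemma nat_L3 (hQ : 2 ≤ Q) : ∀ (K M : ℕ), K ≤ M →
    natB Q (M+1) K * (Q ^ (M+1-K) - 1) = natB Q M K * (Q ^ (M+1) - 1) := by
  intro K
  induction K with
  | zero => intro M _; simp [natB]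
  | succ K ih =>
    intro M hKM
    obtain ⟨M', rfl⟩ : ∃ M', M = M' + 1 := ⟨M - 1, by omega⟩
    have hKM' : K ≤ M' := by omega
    rw [nat_L2 (by omega), nat_L2 hKM']
    have h1 : M' + 1 + 1 - (K + 1) = M' + 1 - K := by omega
    rw [h1]
    have h2 := ih M' hKM'
    have d1 := den_ne hQ (i := K+1) (by omega)
    field_simp
    linear_combination (Q ^ (M' + 1 + 1) - 1) * h2

lemma nat_L5 (hQ : 2 ≤ Q) {M K : ℕ} (h : K + 1 ≤ M) :
    natB Q M K * (Q ^ (M-K) - 1) = natB Q M (K+1) * (Q ^ (K+1) - 1) := by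
  obtain ⟨M', rfl⟩ : ∃ M', M = M' + 1 := ⟨M - 1, by omega⟩
  rw [nat_L2' hQ (by omega)]
  exact nat_L3 hQ K M' (by omega)

lemma zL3 (hQ : 2 ≤ Q) (m k : ℤ) (hm : -1 ≤ m) (hk : 0 ≤ k) :
    qbinom Q (m+1) k * (Q ^ (m+1-k) - 1) = qbinom Q m k * (Q ^ (m+1) - 1) := by
  rcases le_or_gt k m with hkm | hkm
  · have hm0 : 0 ≤ m := le_trans hk hkm
    rw [qbinom_eq_natB hk (by omega), qbinom_eq_natB hk hkm]
    have e1 : (m+1).toNat = m.toNat + 1 := by omega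
    have e2 : Q ^ (m+1-k) = Q ^ (m.toNat + 1 - k.toNat) := by
      rw [← zpow_natCast]; congr 1; omega
    have e3 : Q ^ (m+1) = Q ^ (m.toNat + 1) := by
      rw [← zpow_natCast]; congr 1; omega
    rw [e1, e2, e3]
    exact nat_L3 hQ k.toNat m.toNat (by omega)
  · rcases eq_or_lt_of_le (show m + 1 ≤ k by omega) with hk1 | hk1
    · rw [← hk1]
      simp only [sub_self, zpow_zero, sub_self, mul_zero]
      rw [qbinom_neg (by omega), zero_mul]
    · rw [qbinom_neg (by omega), qbinom_neg (by omega), zero_mul, zero_mul]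

lemma zPascal (hQ : 2 ≤ Q) (M K : ℤ) (hK : 0 ≤ K) :
    qbinom Q (M+1) (K+1) = Q ^ (M - K) * qbinom Q M K + qbinom Q M (K+1) := by
  rcases lt_or_ge M K with h | h
  · rw [qbinom_neg (by omega), qbinom_neg (by omega), qbinom_neg (by omega)]
    ring
  · rcases eq_or_lt_of_le h with hKM | hKM
    · -- K = M
      subst hKM
      rw [show qbinom Q K (K+1) = (0:ℚ) from qbinom_neg (by omega)]
      rw [qbinom_eq_natB (by omega) (by omega), qbinom_eq_natB hK le_rfl]
      have e1 : (K+1).toNat = K.toNat + 1 := by omega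
      rw [e1, sub_self, zpow_zero]
      have h2 := nat_L2' hQ (Q := Q) (M := K.toNat) (K := K.toNat) le_rfl
      have d1 := den_ne hQ (i := K.toNat + 1) (by omega)
      have := mul_right_cancel₀ d1 h2
      rw [this]
      ring
    · -- K < M
      have hM0 : 0 ≤ M := by omega
      rw [qbinom_eq_natB (by omega) (by omega), qbinom_eq_natB hK (by omega),
        qbinom_eq_natB (by omega) (by omega)]
      have e1 : (M+1).toNat = M.toNat + 1 := by omega
      have e2 : (K+1).toNat = K.toNat + 1 := by omega
      have e3 : Q ^ (M - K) = Q ^ (M.toNat - K.toNat) := by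
        rw [← zpow_natCast]; congr 1; omega
      rw [e1, e2, e3]
      have d1 := den_ne hQ (i := K.toNat + 1) (by omega)
      apply mul_right_cancel₀ d1
      rw [nat_L2' hQ (by omega), add_mul, mul_assoc, ← nat_L5 hQ (by omega)]
      have e4 : Q ^ (M.toNat - K.toNat) * Q ^ (K.toNat + 1) = Q ^ (M.toNat + 1) := by
        rw [← pow_add]; congr 1; omega
      linear_combination (- natB Q M.toNat K.toNat) * e4

end QB

namespace QB
variable {Q : ℚ}

lemma scalar1 (hQ : 2 ≤ Q) (m n : ℤ) (hm : 1 ≤ m) (hn : 1 ≤ n) :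
    qbinom Q m n = qbinom Q (m-1) n + qbinom Q (m-1) (n-1)
      + (Q ^ (m-1) - 1) * qbinom Q (m-2) (n-1) := by
  have h1 := zPascal hQ (m-1) (n-1) (by omega)
  rw [show m-1+1 = m by ring, show n-1+1 = n by ring, show m-1-(n-1) = m-n by ring] at h1
  have h2 := zL3 hQ (m-2) (n-1) (by omega) (by omega)
  rw [show m-2+1 = m-1 by ring] at h2; rw [show m-1-(n-1) = m-n by ring] at h2
  linear_combination h1 + h2

lemma scalar2 (hQ : 2 ≤ Q) (a b m n : ℤ) (hm : 1 ≤ m) (hn : 1 ≤ n) (hb : n ≤ b) :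
    qbinom Q (a-n) (b-n) * Q ^ (n*(a-b)) * qbinom Q m n
    = qbinom Q (a-n) (b-n) * Q ^ (n*(a-b)) * qbinom Q (m-1) n
    + qbinom Q (a-(n-1)) (b-(n-1)) * Q ^ ((n-1)*(a-b)) * qbinom Q (m-1) (n-1)
    - Q ^ (m-1) * (qbinom Q (a-1-(n-1)) (b-(n-1)) * Q ^ ((n-1)*(a-1-b)) * qbinom Q (m-1) (n-1))
    + (Q ^ (m-1) - 1) * (qbinom Q (a-(n-1)) (b-(n-1)) * Q ^ ((n-1)*(a-b)) * qbinom Q (m-2) (n-1)) := by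
  have h1 := zPascal hQ (m-1) (n-1) (by omega)
  rw [show m-1+1 = m by ring, show n-1+1 = n by ring, show m-1-(n-1) = m-n by ring] at h1
  have h2 := zL3 hQ (m-2) (n-1) (by omega) (by omega)
  rw [show m-2+1 = m-1 by ring] at h2; rw [show m-1-(n-1) = m-n by ring] at h2
  have h3 := zPascal hQ (a-n) (b-n) (by omega)
  rw [show a-n+1 = a-(n-1) by ring, show b-n+1 = b-(n-1) by ring,
    show a-n-(b-n) = a-b by ring] at h3
  have h3' : qbinom Q (a-n) (b-(n-1)) = qbinom Q (a-1-(n-1)) (b-(n-1)) := by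
    rw [show a-n = a-1-(n-1) by ring]
  rw [h3'] at h3
  have hp1 : Q ^ (n*(a-b)) = Q ^ (a-b) * Q ^ ((n-1)*(a-b)) := by
    rw [← zpow_add₀ (hQ0 hQ)]; congr 1; ring
  have hp2 : Q ^ (m-1) * Q ^ ((n-1)*(a-1-b)) = Q ^ (m-n) * Q ^ ((n-1)*(a-b)) := by
    rw [← zpow_add₀ (hQ0 hQ), ← zpow_add₀ (hQ0 hQ)]; congr 1; ring
  linear_combination (qbinom Q (a-n) (b-n) * Q ^ (n*(a-b))) * h1
    + (qbinom Q (a-(n-1)) (b-(n-1)) * Q ^ ((n-1)*(a-b))) * h2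
    - (Q ^ ((n-1)*(a-b)) * Q ^ (m-n) * qbinom Q (m-1) (n-1)) * h3
    + (qbinom Q (a-n) (b-n) * Q ^ (m-n) * qbinom Q (m-1) (n-1)) * hp1
    + (qbinom Q (a-1-(n-1)) (b-(n-1)) * qbinom Q (m-1) (n-1)) * hp2

end QB

/-- `V(μ,ν) = ∏_{j=1}^{r} binom(μ_j − ν_{j+1}, ν_j − ν_{j+1})_q · q^{ν_{j+1}(μ_j − ν_j)}`,
defined to be `0` if some entry `μ_j` or `ν_j` (for `1 ≤ j ≤ r`) is negative. -/
noncomputable def Vq (q : ℚ) (r : ℕ) (μ ν : ℕ → ℤ) : ℚ :=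
  if ∀ j ∈ Finset.Icc 1 r, 0 ≤ μ j ∧ 0 ≤ ν j then
    ∏ j ∈ Finset.Icc 1 r,
      qbinom q (μ j - ν (j + 1)) (ν j - ν (j + 1)) * q ^ (ν (j + 1) * (μ j - ν j))
  else 0

/-- the recursion
`V(μ,ν) = V(μ′,ν) + V(μ′,ν′) − q^{μ_r−1} V(μ″,ν′) + (q^{μ_r−1} − 1) V(μ‴,ν′)`,
where summands whose argument has a negative entry are treated as `0`
(and the `μ″` term is omitted when `r = 1`). -/
theorem Vq_recursion
    (q r : ℕ) (hq : ∃ p k : ℕ, Nat.Prime p ∧ 0 < k ∧ q = p ^ k) (hr : 1 ≤ r)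
    (μ ν : ℕ → ℤ)
    (hμmono : ∀ i j : ℕ, 1 ≤ i → i ≤ j → j ≤ r → μ j ≤ μ i) (hμr : 1 ≤ μ r)
    (hνmono : ∀ i j : ℕ, 1 ≤ i → i ≤ j → j ≤ r → ν j ≤ ν i) (hνr : 0 ≤ ν r)
    (hνtop : ν (r + 1) = 0) :
    Vq (q : ℚ) r μ ν
      = Vq (q : ℚ) r (Function.update μ r (μ r - 1)) ν
        + Vq (q : ℚ) r (Function.update μ r (μ r - 1)) (Function.update ν r (ν r - 1))
        - (q : ℚ) ^ (μ r - 1)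
            * (if 2 ≤ r then
                Vq (q : ℚ) r
                  (fun j => if j = r then μ r - 1 else if j = r - 1 then μ (r - 1) - 1 else μ j)
                  (Function.update ν r (ν r - 1))
              else 0)
        + ((q : ℚ) ^ (μ r - 1) - 1)
            * Vq (q : ℚ) r (Function.update μ r (μ r - 2)) (Function.update ν r (ν r - 1)) := by
  have hq2 : 2 ≤ q := by
    obtain ⟨p, k, hp, hk, rfl⟩ := hq
    calc 2 ≤ p := hp.two_le
    _ = p ^ 1 := (pow_one p).symm
    _ ≤ p ^ k := Nat.pow_le_pow_right hp.one_lt.le hk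
  have hQ : (2:ℚ) ≤ (q:ℚ) := by exact_mod_cast hq2
  have hQ0 : (q:ℚ) ≠ 0 := QB.hQ0 hQ
  have hμpos : ∀ j ∈ Finset.Icc 1 r, 0 ≤ μ j ∧ 0 ≤ ν j := by
    intro j hj
    simp only [Finset.mem_Icc] at hj
    exact ⟨le_trans (by omega) (hμmono j r hj.1 hj.2 le_rfl),
      le_trans hνr (hνmono j r hj.1 hj.2 le_rfl)⟩
  have hμbd : ∀ j, 1 ≤ j → j ≤ r → μ r ≤ μ j := fun j h1 h2 => hμmono j r h1 h2 le_rfl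
  have hνbd : ∀ j, 1 ≤ j → j ≤ r → ν r ≤ ν j := fun j h1 h2 => hνmono j r h1 h2 le_rfl
  have hcond1 : ∀ j ∈ Finset.Icc 1 r, 0 ≤ Function.update μ r (μ r - 1) j ∧ 0 ≤ ν j := by
    intro j hj
    rcases eq_or_ne j r with rfl | hne
    · rw [Function.update_self]; exact ⟨by omega, hνr⟩
    · rw [Function.update_of_ne hne]; exact hμpos j hj
  rcases eq_or_lt_of_le hνr with hn0 | hn1
  · -- ν r = 0
    have hz : ∀ μ' : ℕ → ℤ, Vq (q:ℚ) r μ' (Function.update ν r (ν r - 1)) = 0 := by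
      intro μ'
      rw [Vq, if_neg]
      intro h
      have := (h r (Finset.mem_Icc.mpr ⟨hr, le_rfl⟩)).2
      rw [Function.update_self] at this
      omega
    rw [hz, hz, hz, ite_self]
    have hmain : Vq (q:ℚ) r μ ν = Vq (q:ℚ) r (Function.update μ r (μ r - 1)) ν := by
      rw [Vq, Vq, if_pos hμpos, if_pos hcond1]
      refine Finset.prod_congr rfl fun j hj => ?_
      rcases eq_or_ne j r with rfl | hne
      · rw [Function.update_self, hνtop, ← hn0]
        simp only [sub_zero, zero_mul, zpow_zero, mul_one]
        rw [QB.qbinom_zero_right (by omega), QB.qbinom_zero_right (by omega)]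
      · rw [Function.update_of_ne hne]
    rw [← hmain]
    ring
  · -- 1 ≤ ν r
    rcases eq_or_lt_of_le hr with hr1 | hr2
    · -- r = 1
      subst hr1
      norm_num at hνtop
      have hone : ∀ (μ' ν' : ℕ → ℤ), (0 ≤ μ' 1 ∧ 0 ≤ ν' 1) → Vq (q:ℚ) 1 μ' ν' =
          qbinom (q:ℚ) (μ' 1 - ν' 2) (ν' 1 - ν' 2) * (q:ℚ) ^ (ν' 2 * (μ' 1 - ν' 1)) := by
        intro μ' ν' h
        rw [Vq, if_pos, Finset.Icc_self, Finset.prod_singleton]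
        intro j hj
        simp only [Finset.mem_Icc] at hj
        have : j = 1 := by omega
        subst this
        exact h
      have hupd2 : Function.update ν 1 (ν 1 - 1) 2 = (0:ℤ) := by
        rw [Function.update_of_ne (by norm_num), hνtop]
      have h0 := hone μ ν ⟨by omega, by omega⟩
      have h1 := hone (Function.update μ 1 (μ 1 - 1)) ν ⟨by simp; omega, by omega⟩
      have h2 := hone (Function.update μ 1 (μ 1 - 1)) (Function.update ν 1 (ν 1 - 1))
        ⟨by simp; omega, by simp; omega⟩
      have h4 : Vq (q:ℚ) 1 (Function.update μ 1 (μ 1 - 2)) (Function.update ν 1 (ν 1 - 1))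
          = qbinom (q:ℚ) (μ 1 - 2) (ν 1 - 1) := by
        rcases le_or_gt 2 (μ 1) with hm2 | hm2
        · rw [hone (Function.update μ 1 (μ 1 - 2)) (Function.update ν 1 (ν 1 - 1))
            ⟨by simp; omega, by simp; omega⟩]
          simp only [Function.update_self, hupd2, sub_zero, zero_mul, zpow_zero, mul_one]
        · rw [Vq, if_neg, QB.qbinom_neg (by omega)]
          intro h
          have := (h 1 (Finset.mem_Icc.mpr ⟨le_rfl, le_rfl⟩)).1
          rw [Function.update_self] at this
          omega
      rw [h0, h1, h2, h4, if_neg (by omega)]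
      simp only [Function.update_self, hupd2, hνtop, sub_zero, zero_mul, zpow_zero, mul_one]
      linear_combination QB.scalar1 hQ (μ 1) (ν 1) hμr (by omega)
    · -- 2 ≤ r
      obtain ⟨s, rfl⟩ : ∃ s, r = s + 2 := ⟨r - 2, by omega⟩
      have hs1 : s + 1 + 1 = s + 2 := rfl
      have hs2 : s + 2 - 1 = s + 1 := rfl
      have hb : ν (s+2) ≤ ν (s+1) := hνmono (s+1) (s+2) (by omega) (by omega) le_rfl
      have ha : μ (s+2) ≤ μ (s+1) := hμmono (s+1) (s+2) (by omega) (by omega) le_rfl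
      have hupdtop : Function.update ν (s+2) (ν (s+2) - 1) (s+2+1) = 0 := by
        rw [Function.update_of_ne (by omega), hνtop]
      have hsplit : ∀ g : ℕ → ℚ, (∏ j ∈ Finset.Icc 1 (s+2), g j)
          = (∏ j ∈ Finset.Icc 1 s, g j) * g (s+1) * g (s+2) := by
        intro g
        rw [show s+2 = (s+1)+1 from rfl, Finset.prod_Icc_succ_top (by omega),
          Finset.prod_Icc_succ_top (by omega)]
      have hcond2 : ∀ j ∈ Finset.Icc 1 (s+2), 0 ≤ Function.update μ (s+2) (μ (s+2) - 1) j ∧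
          0 ≤ Function.update ν (s+2) (ν (s+2) - 1) j := by
        intro j hj
        simp only [Finset.mem_Icc] at hj
        rcases eq_or_ne j (s+2) with rfl | hne
        · rw [Function.update_self, Function.update_self]
          constructor <;> omega
        · rw [Function.update_of_ne hne, Function.update_of_ne hne]
          exact ⟨le_trans (by omega) (hμbd j hj.1 hj.2), le_trans (by omega) (hνbd j hj.1 hj.2)⟩
      have hcond3 : ∀ j ∈ Finset.Icc 1 (s+2),
          0 ≤ (if j = s + 2 then μ (s + 2) - 1 else if j = s + 2 - 1 then μ (s + 2 - 1) - 1 else μ j) ∧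
          0 ≤ Function.update ν (s+2) (ν (s+2) - 1) j := by
        intro j hj
        simp only [Finset.mem_Icc] at hj
        constructor
        · rw [hs2]
          split_ifs with e1 e2
          · omega
          · have := hμbd (s+1) (by omega) (by omega)
            omega
          · exact le_trans (by omega) (hμbd j hj.1 hj.2)
        · rcases eq_or_ne j (s+2) with rfl | hne
          · rw [Function.update_self]; omega
          · rw [Function.update_of_ne hne]
            exact le_trans (by omega) (hνbd j hj.1 hj.2)
      have hcond4 : 2 ≤ μ (s+2) → ∀ j ∈ Finset.Icc 1 (s+2),
          0 ≤ Function.update μ (s+2) (μ (s+2) - 2) j ∧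
          0 ≤ Function.update ν (s+2) (ν (s+2) - 1) j := by
        intro hm2 j hj
        simp only [Finset.mem_Icc] at hj
        rcases eq_or_ne j (s+2) with rfl | hne
        · rw [Function.update_self, Function.update_self]
          constructor <;> omega
        · rw [Function.update_of_ne hne, Function.update_of_ne hne]
          exact ⟨le_trans (by omega) (hμbd j hj.1 hj.2), le_trans (by omega) (hνbd j hj.1 hj.2)⟩
      have hV0 : Vq (q:ℚ) (s+2) μ ν
          = (∏ j ∈ Finset.Icc 1 s, (qbinom (q:ℚ) (μ j - ν (j+1)) (ν j - ν (j+1)) * (q:ℚ) ^ (ν (j+1) * (μ j - ν j))))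
            * (qbinom (q:ℚ) (μ (s+1) - ν (s+2)) (ν (s+1) - ν (s+2)) * (q:ℚ) ^ (ν (s+2) * (μ (s+1) - ν (s+1))))
            * qbinom (q:ℚ) (μ (s+2)) (ν (s+2)) := by
        rw [Vq, if_pos hμpos, hsplit]
        simp only [hs1, hνtop, sub_zero, zero_mul, zpow_zero, mul_one]
      have hV1 : Vq (q:ℚ) (s+2) (Function.update μ (s+2) (μ (s+2) - 1)) ν
          = (∏ j ∈ Finset.Icc 1 s, (qbinom (q:ℚ) (μ j - ν (j+1)) (ν j - ν (j+1)) * (q:ℚ) ^ (ν (j+1) * (μ j - ν j))))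
            * (qbinom (q:ℚ) (μ (s+1) - ν (s+2)) (ν (s+1) - ν (s+2)) * (q:ℚ) ^ (ν (s+2) * (μ (s+1) - ν (s+1))))
            * qbinom (q:ℚ) (μ (s+2) - 1) (ν (s+2)) := by
        rw [Vq, if_pos hcond1, hsplit]
        simp only [hs1, hνtop, sub_zero, zero_mul, zpow_zero, mul_one]
        congr 1
        · congr 1
          · refine Finset.prod_congr rfl fun j hj => ?_
            simp only [Finset.mem_Icc] at hj
            rw [Function.update_of_ne (by omega)]
          · rw [Function.update_of_ne (by omega)]
        · rw [Function.update_self]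
      have hV2 : Vq (q:ℚ) (s+2) (Function.update μ (s+2) (μ (s+2) - 1)) (Function.update ν (s+2) (ν (s+2) - 1))
          = (∏ j ∈ Finset.Icc 1 s, (qbinom (q:ℚ) (μ j - ν (j+1)) (ν j - ν (j+1)) * (q:ℚ) ^ (ν (j+1) * (μ j - ν j))))
            * (qbinom (q:ℚ) (μ (s+1) - (ν (s+2) - 1)) (ν (s+1) - (ν (s+2) - 1)) * (q:ℚ) ^ ((ν (s+2) - 1) * (μ (s+1) - ν (s+1))))
            * qbinom (q:ℚ) (μ (s+2) - 1) (ν (s+2) - 1) := by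
        rw [Vq, if_pos hcond2, hsplit]
        simp only [hs1, hupdtop, sub_zero, zero_mul, zpow_zero, mul_one]
        congr 1
        · congr 1
          · refine Finset.prod_congr rfl fun j hj => ?_
            simp only [Finset.mem_Icc] at hj
            rw [Function.update_of_ne (by omega), Function.update_of_ne (by omega),
              Function.update_of_ne (by omega)]
          · rw [Function.update_of_ne (by omega), Function.update_self,
              Function.update_of_ne (by omega)]
        · rw [Function.update_self, Function.update_self]
      have hV3 : Vq (q:ℚ) (s+2)
            (fun j => if j = s + 2 then μ (s + 2) - 1 else if j = s + 2 - 1 then μ (s + 2 - 1) - 1 else μ j)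
            (Function.update ν (s+2) (ν (s+2) - 1))
          = (∏ j ∈ Finset.Icc 1 s, (qbinom (q:ℚ) (μ j - ν (j+1)) (ν j - ν (j+1)) * (q:ℚ) ^ (ν (j+1) * (μ j - ν j))))
            * (qbinom (q:ℚ) (μ (s+1) - 1 - (ν (s+2) - 1)) (ν (s+1) - (ν (s+2) - 1)) * (q:ℚ) ^ ((ν (s+2) - 1) * (μ (s+1) - 1 - ν (s+1))))
            * qbinom (q:ℚ) (μ (s+2) - 1) (ν (s+2) - 1) := by
        rw [Vq, if_pos hcond3, hsplit]
        congr 1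
        · congr 1
          · refine Finset.prod_congr rfl fun j hj => ?_
            simp only [Finset.mem_Icc] at hj
            rw [if_neg (show ¬(j = s+2) by omega), if_neg (show ¬(j = s+2-1) by omega),
              Function.update_of_ne (show j+1 ≠ s+2 by omega),
              Function.update_of_ne (show j ≠ s+2 by omega)]
          · rw [if_neg (show ¬(s+1 = s+2) by omega), if_pos (show s+1 = s+2-1 by omega), hs2,
              Function.update_of_ne (show s+1 ≠ s+2 by omega),
              Function.update_self]
        · rw [if_pos (rfl : s+2 = s+2), hupdtop, Function.update_self]
          simp only [sub_zero, zero_mul, zpow_zero, mul_one]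
      have hV4 : Vq (q:ℚ) (s+2) (Function.update μ (s+2) (μ (s+2) - 2)) (Function.update ν (s+2) (ν (s+2) - 1))
          = (∏ j ∈ Finset.Icc 1 s, (qbinom (q:ℚ) (μ j - ν (j+1)) (ν j - ν (j+1)) * (q:ℚ) ^ (ν (j+1) * (μ j - ν j))))
            * (qbinom (q:ℚ) (μ (s+1) - (ν (s+2) - 1)) (ν (s+1) - (ν (s+2) - 1)) * (q:ℚ) ^ ((ν (s+2) - 1) * (μ (s+1) - ν (s+1))))
            * qbinom (q:ℚ) (μ (s+2) - 2) (ν (s+2) - 1) := by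
        rcases le_or_gt 2 (μ (s+2)) with hm2 | hm2
        · rw [Vq, if_pos (hcond4 hm2), hsplit]
          simp only [hs1, hupdtop, sub_zero, zero_mul, zpow_zero, mul_one]
          congr 1
          · congr 1
            · refine Finset.prod_congr rfl fun j hj => ?_
              simp only [Finset.mem_Icc] at hj
              rw [Function.update_of_ne (by omega), Function.update_of_ne (by omega),
                Function.update_of_ne (by omega)]
            · rw [Function.update_of_ne (by omega), Function.update_self,
                Function.update_of_ne (by omega)]
          · rw [Function.update_self, Function.update_self]
        · rw [show qbinom (q:ℚ) (μ (s+2) - 2) (ν (s+2) - 1) = 0 from QB.qbinom_neg (by omega),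
            mul_zero, Vq, if_neg]
          intro h
          have := (h (s+2) (Finset.mem_Icc.mpr ⟨by omega, le_rfl⟩)).1
          rw [Function.update_self] at this
          omega
      rw [hV0, hV1, hV2, hV3, hV4, if_pos (by omega)]
      linear_combination (∏ j ∈ Finset.Icc 1 s, (qbinom (q:ℚ) (μ j - ν (j+1)) (ν j - ν (j+1)) * (q:ℚ) ^ (ν (j+1) * (μ j - ν j))))
        * QB.scalar2 hQ (μ (s+1)) (ν (s+1)) (μ (s+2)) (ν (s+2)) hμr (by omega) hb
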